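/- Let p be a prime number and m a natural number, and for j ∈ ℕ write q_j := ⌊j / p^m⌋. Then for all natural numbers k', k'', l with max(k',k'') ≤ l ≤ k'+k'': padicValNat p (q_l!) + padicValNat p ((k'+k''−l)!) + padicValNat p ((l−k')!) + padicValNat p ((l−k'')!) ≤ padicValNat p (l!) + padicValNat p (q_{k'}!) + padicValNat p (q_{k''}!). (Equivalently, the coefficient q_{k'}!·q_{k''}!·l!/(q_l!·(k'+k''−l)!·(l−k')!·(l−k'')!) appearing in the multiplication formula of D^(m)(𝔾_m) is a p-adic integer.) -/

import Mathlib

/-- The structure constants of the level-`m` distribution algebra `D^(m)(𝔾_m)`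
are `p`-adic integers: with `q j = j / p^m`, for `max k' k'' ≤ l ≤ k' + k''`,
the coefficient `q_{k'}!·q_{k''}!·l!/(q_l!·(k'+k''−l)!·(l−k')!·(l−k'')!)` has
nonnegative `p`-adic valuation. -/
theorem stmt_5 (p : ℕ) (hp : p.Prime) (m k' k'' l : ℕ)
    (h1 : max k' k'' ≤ l) (h2 : l ≤ k' + k'') :
    padicValNat p (Nat.factorial (l / p ^ m)) +
        padicValNat p (Nat.factorial (k' + k'' - l)) +
        padicValNat p (Nat.factorial (l - k')) +
        padicValNat p (Nat.factorial (l - k'')) ≤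
      padicValNat p (Nat.factorial l) +
        padicValNat p (Nat.factorial (k' / p ^ m)) +
        padicValNat p (Nat.factorial (k'' / p ^ m)) := by
  haveI : Fact p.Prime := ⟨hp⟩
  have hk'l : k' ≤ l := le_trans (le_max_left _ _) h1
  have hk''l : k'' ≤ l := le_trans (le_max_right _ _) h1
  set B := l + 1 with hBdef
  have hlog : ∀ n, n ≤ l → Nat.log p n < 1 + m + B := by
    intro n hn
    have := (Nat.log_le_self p n).trans hn
    omega
  have hlogq : ∀ n, n ≤ l → Nat.log p (n / p ^ m) < B := by
    intro n hn
    have h := (Nat.log_le_self p (n / p ^ m)).trans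
      ((Nat.div_le_self n (p ^ m)).trans hn)
    omega
  -- rewrite all factorial valuations as Legendre sums
  rw [padicValNat_factorial (hlog l le_rfl),
      padicValNat_factorial (hlog (k' + k'' - l) (by omega)),
      padicValNat_factorial (hlog (l - k') (by omega)),
      padicValNat_factorial (hlog (l - k'') (by omega)),
      padicValNat_factorial (hlogq l le_rfl),
      padicValNat_factorial (hlogq k' hk'l),
      padicValNat_factorial (hlogq k'' hk''l)]
  -- turn the `q` sums into shifted sums
  have hq : ∀ j : ℕ, (∑ i ∈ Finset.Ico 1 B, j / p ^ m / p ^ i)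
      = ∑ i ∈ Finset.Ico (1 + m) (B + m), j / p ^ i := by
    intro j
    rw [← Finset.sum_Ico_add' (fun i => j / p ^ i) 1 B m]
    refine Finset.sum_congr rfl fun i _ => ?_
    rw [Nat.div_div_eq_div_mul, ← pow_add, add_comm m i]
  rw [hq l, hq k', hq k'']
  -- split the full sum for `l` at `1 + m`
  have hsplit : (∑ i ∈ Finset.Ico 1 (1 + m + B), l / p ^ i)
      = (∑ i ∈ Finset.Ico 1 (1 + m), l / p ^ i)
        + ∑ i ∈ Finset.Ico (1 + m) (1 + m + B), l / p ^ i :=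
    (Finset.sum_Ico_consecutive _ (by omega) (by omega)).symm
  have hIco : Finset.Ico (1 + m) (B + m) ⊆ Finset.Ico (1 + m) (1 + m + B) := by
    apply Finset.Ico_subset_Ico le_rfl; omega
  have hql_le : (∑ i ∈ Finset.Ico (1 + m) (B + m), l / p ^ i)
      ≤ ∑ i ∈ Finset.Ico (1 + m) (1 + m + B), l / p ^ i :=
    Finset.sum_le_sum_of_subset hIco
  -- the three complementary sums, split at `1 + m`
  have hsplit3 : ∀ j : ℕ, (∑ i ∈ Finset.Ico 1 (1 + m + B), j / p ^ i)
      = (∑ i ∈ Finset.Ico 1 (1 + m), j / p ^ i)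
        + ∑ i ∈ Finset.Ico (1 + m) (1 + m + B), j / p ^ i :=
    fun j => (Finset.sum_Ico_consecutive _ (by omega) (by omega)).symm
  -- low part: a/p^i + b/p^i + c/p^i ≤ l/p^i  since a+b+c = l
  have hlow : (∑ i ∈ Finset.Ico 1 (1 + m), (k' + k'' - l) / p ^ i)
      + (∑ i ∈ Finset.Ico 1 (1 + m), (l - k') / p ^ i)
      + (∑ i ∈ Finset.Ico 1 (1 + m), (l - k'') / p ^ i)
      ≤ ∑ i ∈ Finset.Ico 1 (1 + m), l / p ^ i := by
    rw [← Finset.sum_add_distrib, ← Finset.sum_add_distrib]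
    refine Finset.sum_le_sum fun i _ => ?_
    calc (k' + k'' - l) / p ^ i + (l - k') / p ^ i + (l - k'') / p ^ i
        ≤ ((k' + k'' - l) + (l - k')) / p ^ i + (l - k'') / p ^ i := by
          gcongr ?_ + _; exact Nat.add_div_le_add_div _ _ _
      _ ≤ ((k' + k'' - l) + (l - k') + (l - k'')) / p ^ i :=
          Nat.add_div_le_add_div _ _ _
      _ = l / p ^ i := by congr 1; omega
  -- high part: a/p^i + c/p^i ≤ k'/p^i (a+c = k') and b/p^i ≤ k''/p^i (b ≤ k'')
  have hhigh : (∑ i ∈ Finset.Ico (1 + m) (1 + m + B), (k' + k'' - l) / p ^ i)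
      + (∑ i ∈ Finset.Ico (1 + m) (1 + m + B), (l - k') / p ^ i)
      + (∑ i ∈ Finset.Ico (1 + m) (1 + m + B), (l - k'') / p ^ i)
      ≤ (∑ i ∈ Finset.Ico (1 + m) (B + m), k' / p ^ i)
        + ∑ i ∈ Finset.Ico (1 + m) (B + m), k'' / p ^ i := by
    have hIco' : Finset.Ico (1 + m) (1 + m + B) = Finset.Ico (1 + m) (B + m) ∪
        Finset.Ico (B + m) (1 + m + B) := by
      rw [Finset.Ico_union_Ico_eq_Ico (by omega) (by omega)]
    have hz : ∀ j : ℕ, j ≤ l → ∀ i ∈ Finset.Ico (B + m) (1 + m + B), j / p ^ i = 0 := by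
      intro j hj i hi
      rw [Finset.mem_Ico] at hi
      apply Nat.div_eq_of_lt
      calc j ≤ l := hj
        _ < 2 ^ (B + m) := by
            have : B ≤ 2 ^ B := (Nat.lt_two_pow_self (n := B)).le
            have h2 : (2:ℕ) ^ B ≤ 2 ^ (B + m) := Nat.pow_le_pow_right (by norm_num) (by omega)
            omega
        _ ≤ p ^ (B + m) := Nat.pow_le_pow_left hp.two_le _
        _ ≤ p ^ i := Nat.pow_le_pow_right hp.one_lt.le hi.1
    have htrunc : ∀ j : ℕ, j ≤ l →
        (∑ i ∈ Finset.Ico (1 + m) (1 + m + B), j / p ^ i)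
          = ∑ i ∈ Finset.Ico (1 + m) (B + m), j / p ^ i := by
      intro j hj
      rw [← Finset.sum_Ico_consecutive (fun i => j / p ^ i)
        (show 1 + m ≤ B + m by omega) (show B + m ≤ 1 + m + B by omega)]
      rw [Finset.sum_congr rfl (hz j hj), Finset.sum_const_zero, add_zero]
    rw [htrunc _ (by omega), htrunc _ (by omega), htrunc _ (by omega)]
    have e1 : (∑ i ∈ Finset.Ico (1 + m) (B + m), (k' + k'' - l) / p ^ i)
        + (∑ i ∈ Finset.Ico (1 + m) (B + m), (l - k'') / p ^ i)
        ≤ ∑ i ∈ Finset.Ico (1 + m) (B + m), k' / p ^ i := by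
      rw [← Finset.sum_add_distrib]
      refine Finset.sum_le_sum fun i _ => ?_
      calc (k' + k'' - l) / p ^ i + (l - k'') / p ^ i
          ≤ ((k' + k'' - l) + (l - k'')) / p ^ i := Nat.add_div_le_add_div _ _ _
        _ = k' / p ^ i := by congr 1; omega
    have e2 : (∑ i ∈ Finset.Ico (1 + m) (B + m), (l - k') / p ^ i)
        ≤ ∑ i ∈ Finset.Ico (1 + m) (B + m), k'' / p ^ i := by
      refine Finset.sum_le_sum fun i _ => ?_
      exact Nat.div_le_div_right (by omega)
    omega
  rw [hsplit, hsplit3 (k' + k'' - l), hsplit3 (l - k'), hsplit3 (l - k'')]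
  omega
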